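/- arXiv:1705.04158 — 5 statements merged into one kernel-verified Lean document; each statement's English description precedes it below -/
import Mathlib

section
/- Let L ≥ 1 be an integer and let h, Δ be L×L matrices with entries in 𝔄, and set H = [[h, Δ], [−Δ̄, −h̄]] (a 2L×2L matrix over 𝔄 in the particle–hole grading). Let S^j = [[s^j, 0], [0, −(s^j)ᵀ]] for j = 1,2,3, where (s^j)ᵀ is the ordinary transpose of the complex matrix s^j, regarded as a 2L×2L matrix over 𝔄. If [S^j, H] = 0 for j = 1, 2, 3, then there exist operators h_red, Δ_red ∈ 𝔄 such that h_{l,l'} = δ_{l,l'}·h_red for all l, l' and Δ_{l,l'} = T_{l,l'}·Δ_red for all l, l' (i.e. h = h_red·1_L and Δ = Δ_red·T). -/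
noncomputable section
open Matrix
set_option synthInstance.maxHeartbeats 1000000
set_option maxHeartbeats 1000000

/-- The Hilbert space ℓ²(ℤ²;ℂ). -/
abbrev Hilb : Type := lp (fun _ : ℤ × ℤ => ℂ) 2

/-- The C*-algebra 𝔄 of bounded linear operators on ℓ²(ℤ²;ℂ). -/
abbrev Amod : Type := Hilb →L[ℂ] Hilb

/-- Conjugation ā = C ∘ a ∘ C with C the componentwise complex conjugation on ℓ²(ℤ²;ℂ). -/
noncomputable def opConj (a : Amod) : Amod :=
  LinearMap.mkContinuous
    { toFun := fun ψ => star (a (star ψ))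
      map_add' := fun x y => by simp [star_add, map_add]
      map_smul' := fun c x => by simp [star_smul, _root_.map_smul] }
    ‖a‖
    (fun x => by
      show ‖star (a (star x))‖ ≤ ‖a‖ * ‖x‖
      rw [norm_star]
      exact (a.le_opNorm _).trans (by rw [norm_star]))

/-- Operator transpose aᵀ = (ā)*. -/
noncomputable def opTrans (a : Amod) : Amod := star (opConj a)

/-- Standard spin matrix s³ (indices are 0-based, so `(spin3 L) l l' = (s+1-(l+1)) δ_{l,l'}`
with `s = (L-1)/2`). -/
noncomputable def spin3 (L : ℕ) : Matrix (Fin L) (Fin L) ℂ :=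
  Matrix.of fun l l' => if l = l' then ((L : ℂ) - 1 - 2 * (l : ℕ)) / 2 else 0

/-- Standard raising matrix s₊, with (s₊)_{l,l'} = √(l(L-l))·δ_{l',l+1} in 1-based indices. -/
noncomputable def spinP (L : ℕ) : Matrix (Fin L) (Fin L) ℂ :=
  Matrix.of fun l l' =>
    if (l' : ℕ) = (l : ℕ) + 1 then
      (Real.sqrt (((l : ℕ) + 1) * (L - ((l : ℕ) + 1))) : ℂ) else 0

/-- Standard lowering matrix s₋ = (s₊)*. -/
noncomputable def spinM (L : ℕ) : Matrix (Fin L) (Fin L) ℂ := (spinP L)ᴴ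

/-- Standard spin matrix s¹ = (s₋+s₊)/2. -/
noncomputable def spin1 (L : ℕ) : Matrix (Fin L) (Fin L) ℂ := (2 : ℂ)⁻¹ • (spinM L + spinP L)

/-- Standard spin matrix s² = i(s₋-s₊)/2. -/
noncomputable def spin2 (L : ℕ) : Matrix (Fin L) (Fin L) ℂ :=
  (Complex.I / 2) • (spinM L - spinP L)

/-- The three standard spin matrices (j = 0,1,2 corresponding to s¹,s²,s³). -/
noncomputable def spin (L : ℕ) : Fin 3 → Matrix (Fin L) (Fin L) ℂ
  | 0 => spin1 L
  | 1 => spin2 L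
  | 2 => spin3 L

/-- The cross-diagonal matrix T with T_{l,l'} = (-1)^{l+1} if l+l' = L+1 (1-based indices). -/
noncomputable def Tmat (L : ℕ) : Matrix (Fin L) (Fin L) ℂ :=
  Matrix.of fun l l' => if (l : ℕ) + (l' : ℕ) + 1 = L then ((-1 : ℂ)) ^ (l : ℕ) else 0

/-- A complex matrix viewed as a matrix with entries in the operator algebra 𝔄. -/
noncomputable def coeM {L : ℕ} (m : Matrix (Fin L) (Fin L) ℂ) : Matrix (Fin L) (Fin L) Amod :=
  m.map (algebraMap ℂ Amod)

/-- Entrywise conjugation M̄ of an operator-valued matrix. -/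
noncomputable def conjM {L : ℕ} (M : Matrix (Fin L) (Fin L) Amod) :
    Matrix (Fin L) (Fin L) Amod :=
  M.map opConj

/-- The BdG Hamiltonian H = [[h, Δ], [-Δ̄, -h̄]] in the particle-hole grading. -/
noncomputable def BdG {L : ℕ} (h Δ : Matrix (Fin L) (Fin L) Amod) :
    Matrix (Fin L ⊕ Fin L) (Fin L ⊕ Fin L) Amod :=
  Matrix.fromBlocks h Δ (-(conjM Δ)) (-(conjM h))

/-- The spin matrices S^j = [[s^j, 0], [0, -(s^j)ᵀ]] in the particle-hole grading. -/
noncomputable def Smat (L : ℕ) (j : Fin 3) :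
    Matrix (Fin L ⊕ Fin L) (Fin L ⊕ Fin L) Amod :=
  Matrix.fromBlocks (coeM (spin L j)) 0 0 (-(coeM ((spin L j)ᵀ)))

namespace SU2Aux
open Matrix

variable {L : ℕ}

/-- flip index l ↦ L-1-l -/
def flip (l : Fin L) : Fin L := ⟨L - 1 - l, by have := l.isLt; omega⟩

lemma coeM_mul (m n : Matrix (Fin L) (Fin L) ℂ) :
    coeM (m * n) = coeM m * coeM n := _root_.Matrix.map_mul

lemma coeM_neg (m : Matrix (Fin L) (Fin L) ℂ) : coeM (-m) = -coeM m := by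
  ext l l' : 2; simp [coeM]

lemma coeM_add (m n : Matrix (Fin L) (Fin L) ℂ) : coeM (m + n) = coeM m + coeM n := by
  ext l l' : 2; simp [coeM]

lemma coeM_smul (c : ℂ) (m : Matrix (Fin L) (Fin L) ℂ) : coeM (c • m) = c • coeM m := by
  ext l l' : 2
  simp only [coeM, Matrix.map_apply, Matrix.smul_apply, smul_eq_mul, _root_.map_mul]
  rw [← Algebra.smul_def]

lemma coeM_one : coeM (1 : Matrix (Fin L) (Fin L) ℂ) = 1 := by
  ext l l' : 2; simp [coeM, Matrix.one_apply, apply_ite]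


lemma spin3_mul_apply (M : Matrix (Fin L) (Fin L) Amod) (l l' : Fin L) :
    (coeM (spin3 L) * M) l l' = (((L : ℂ) - 1 - 2 * (l : ℕ)) / 2) • M l l' := by
  rw [Matrix.mul_apply, Finset.sum_eq_single l]
  · simp [coeM, spin3, Algebra.smul_def]
  · intro k _ hk
    simp [coeM, spin3, Ne.symm hk]
  · intro hmem; exact absurd (Finset.mem_univ l) hmem

lemma mul_spin3_apply (M : Matrix (Fin L) (Fin L) Amod) (l l' : Fin L) :
    (M * coeM (spin3 L)) l l' = (((L : ℂ) - 1 - 2 * (l' : ℕ)) / 2) • M l l' := by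
  rw [Matrix.mul_apply, Finset.sum_eq_single l']
  · rw [show (coeM (spin3 L)) l' l' = algebraMap ℂ Amod (((L : ℂ) - 1 - 2 * (l' : ℕ)) / 2) by
        simp [coeM, spin3]]
    rw [← Algebra.commutes, ← Algebra.smul_def]
  · intro k _ hk
    simp [coeM, spin3, hk]
  · intro hmem; exact absurd (Finset.mem_univ l') hmem

/-- Schur-type lemma: a matrix over 𝔄 commuting with `spin3` and `spinP` is scalar. -/
lemma schur (hL : 1 ≤ L) (M : Matrix (Fin L) (Fin L) Amod)
    (h3 : coeM (spin3 L) * M = M * coeM (spin3 L))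
    (hp : coeM (spinP L) * M = M * coeM (spinP L)) :
    ∀ l l' : Fin L, M l l' = if l = l' then M ⟨0, hL⟩ ⟨0, hL⟩ else 0 := by
  have offd : ∀ l l' : Fin L, l ≠ l' → M l l' = 0 := by
    intro l l' hne
    have e := congrFun (congrFun h3 l) l'
    rw [spin3_mul_apply, mul_spin3_apply] at e
    have e2 : ((((L : ℂ) - 1 - 2 * (l : ℕ)) / 2) - (((L : ℂ) - 1 - 2 * (l' : ℕ)) / 2)) • M l l'
        = 0 := by rw [sub_smul, e, sub_self]
    rcases smul_eq_zero.mp e2 with hc | hm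
    · exfalso
      apply hne
      have hcc : ((l : ℕ) : ℂ) = ((l' : ℕ) : ℂ) := by linear_combination -hc
      exact Fin.ext (Nat.cast_injective hcc)
    · exact hm
  have diag : ∀ n (hn : n + 1 < L),
      M ⟨n + 1, hn⟩ ⟨n + 1, hn⟩ = M ⟨n, by omega⟩ ⟨n, by omega⟩ := by
    intro n hn
    have e := congrFun (congrFun hp (⟨n, by omega⟩ : Fin L)) (⟨n + 1, hn⟩ : Fin L)
    rw [Matrix.mul_apply, Matrix.mul_apply] at e
    rw [Finset.sum_eq_single (⟨n + 1, hn⟩ : Fin L)] at e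
    · rw [Finset.sum_eq_single (⟨n, by omega⟩ : Fin L)] at e
      · have c1 : (coeM (spinP L)) ⟨n, by omega⟩ ⟨n + 1, hn⟩
            = algebraMap ℂ Amod ((Real.sqrt ((n + 1) * (L - (n + 1))) : ℝ) : ℂ) := by
          simp [coeM, spinP]
        rw [c1] at e
        have hc : ((Real.sqrt ((n + 1) * (L - (n + 1))) : ℝ) : ℂ) ≠ 0 := by
          have hlt : (n : ℝ) + 1 < L := by exact_mod_cast hn
          have hpos : (0 : ℝ) < ((n : ℝ) + 1) * ((L : ℝ) - ((n : ℝ) + 1)) :=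
            mul_pos (by positivity) (sub_pos.mpr hlt)
          simp only [ne_eq, Complex.ofReal_eq_zero]
          exact (Real.sqrt_pos.mpr hpos).ne'
        have e' : ((Real.sqrt ((n + 1) * (L - (n + 1))) : ℝ) : ℂ) • M ⟨n + 1, hn⟩ ⟨n + 1, hn⟩
            = ((Real.sqrt ((n + 1) * (L - (n + 1))) : ℝ) : ℂ) • M ⟨n, by omega⟩ ⟨n, by omega⟩ := by
          rw [Algebra.smul_def, Algebra.smul_def, e, ← Algebra.commutes]
        exact smul_right_injective _ hc e'
      · intro k _ hk
        have : ¬ ((n + 1 : ℕ) = (k : ℕ) + 1) := by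
          intro hcon
          apply hk; apply Fin.ext; simp only [Fin.val_mk]; omega
        simp [coeM, spinP, this, show ¬ (n = (k : ℕ)) by omega]
      · intro hmem; exact absurd (Finset.mem_univ _) hmem
    · intro k _ hk
      have : ¬ ((k : ℕ) = n + 1) := by
        intro hcon
        apply hk; apply Fin.ext; simpa using hcon
      simp [coeM, spinP, this]
    · intro hmem; exact absurd (Finset.mem_univ _) hmem
  have key : ∀ n (hn : n < L), M ⟨n, hn⟩ ⟨n, hn⟩ = M ⟨0, hL⟩ ⟨0, hL⟩ := by
    intro n
    induction n with
    | zero => intro hn; rfl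
    | succ k ih => intro hn; rw [diag k hn]; exact ih (by omega)
  intro l l'
  rcases eq_or_ne l l' with rfl | hne
  · simp only [if_pos rfl]
    have := key l.1 l.2
    simpa using this
  · simp [hne, offd l l' hne]


lemma Tmat_mul_apply (A : Matrix (Fin L) (Fin L) ℂ) (l l' : Fin L) :
    (Tmat L * A) l l' = (-1 : ℂ) ^ (l : ℕ) * A (flip l) l' := by
  rw [Matrix.mul_apply, Finset.sum_eq_single (flip l)]
  · congr 1
    have hcond : (l : ℕ) + ((flip l : Fin L) : ℕ) + 1 = L := by
      simp only [flip, Fin.val_mk]; have := l.isLt; omega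
    simp [Tmat, hcond]
  · intro k _ hk
    have : ¬ ((l : ℕ) + (k : ℕ) + 1 = L) := by
      intro hcon
      apply hk; apply Fin.ext
      simp only [flip, Fin.val_mk]; omega
    simp [Tmat, this]
  · intro hmem; exact absurd (Finset.mem_univ _) hmem

lemma mul_Tmat_apply (A : Matrix (Fin L) (Fin L) ℂ) (l l' : Fin L) :
    (A * Tmat L) l l' = A l (flip l') * (-1 : ℂ) ^ (L - 1 - (l' : ℕ)) := by
  rw [Matrix.mul_apply, Finset.sum_eq_single (flip l')]
  · congr 1
    have hcond : ((flip l' : Fin L) : ℕ) + (l' : ℕ) + 1 = L := by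
      simp only [flip, Fin.val_mk]; have := l'.isLt; omega
    have hcond2 : L - 1 - (l' : ℕ) + (l' : ℕ) + 1 = L := by have := l'.isLt; omega
    simp only [Tmat, Matrix.of_apply, flip, Fin.val_mk, if_pos hcond2]
  · intro k _ hk
    have : ¬ ((k : ℕ) + (l' : ℕ) + 1 = L) := by
      intro hcon; apply hk; apply Fin.ext; simp only [flip, Fin.val_mk]; omega
    simp [Tmat, this]
  · intro hmem; exact absurd (Finset.mem_univ _) hmem

lemma spin3_mulC (A : Matrix (Fin L) (Fin L) ℂ) (l l' : Fin L) :
    (spin3 L * A) l l' = (((L : ℂ) - 1 - 2 * (l : ℕ)) / 2) * A l l' := by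
  rw [Matrix.mul_apply, Finset.sum_eq_single l]
  · simp [spin3]
  · intro k _ hk; simp [spin3, Ne.symm hk]
  · intro hmem; exact absurd (Finset.mem_univ _) hmem

lemma mulC_spin3 (A : Matrix (Fin L) (Fin L) ℂ) (l l' : Fin L) :
    (A * spin3 L) l l' = A l l' * (((L : ℂ) - 1 - 2 * (l' : ℕ)) / 2) := by
  rw [Matrix.mul_apply, Finset.sum_eq_single l']
  · simp [spin3]
  · intro k _ hk; simp [spin3, hk]
  · intro hmem; exact absurd (Finset.mem_univ _) hmem

lemma Tmat_spin3 : Tmat L * spin3 L = -(spin3 L * Tmat L) := by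
  ext l l' : 2
  rw [mulC_spin3, Matrix.neg_apply, spin3_mulC]
  rcases em ((l : ℕ) + (l' : ℕ) + 1 = L) with hc | hc
  · have hcast : ((l : ℕ) : ℂ) + ((l' : ℕ) : ℂ) + 1 = (L : ℂ) := by exact_mod_cast hc
    simp only [Tmat, Matrix.of_apply, if_pos hc]
    linear_combination -((-(1 : ℂ)) ^ (l : ℕ)) * hcast
  · simp [Tmat, hc]

lemma Tmat_Tmat : Tmat L * Tmat L = ((-1 : ℂ) ^ (L - 1)) • (1 : Matrix (Fin L) (Fin L) ℂ) := by
  ext l l' : 2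
  rw [Tmat_mul_apply]
  simp only [Matrix.smul_apply, Matrix.one_apply, smul_eq_mul]
  rcases eq_or_ne l l' with rfl | hne
  · have hcond : ((flip l : Fin L) : ℕ) + (l : ℕ) + 1 = L := by
      simp only [flip, Fin.val_mk]; have := l.isLt; omega
    simp only [Tmat, Matrix.of_apply, if_pos hcond, if_pos rfl, mul_one]
    rw [← pow_add]
    simp only [flip, Fin.val_mk]
    rw [show (l : ℕ) + (L - 1 - (l : ℕ)) = L - 1 by have := l.isLt; omega]
    simp
  · have hcond : ¬ (((flip l : Fin L) : ℕ) + (l' : ℕ) + 1 = L) := by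
      intro hcon; apply hne; apply Fin.ext
      simp only [flip, Fin.val_mk] at hcon; have := l.isLt; omega
    simp [Tmat, hcond, hne]

lemma Tmat_spinP : Tmat L * spinP L = -(spinM L * Tmat L) := by
  ext l l' : 2
  rw [Tmat_mul_apply, Matrix.neg_apply, mul_Tmat_apply]
  have hsM : spinM L l (flip l') = spinP L (flip l') l := by
    simp only [spinM, Matrix.conjTranspose_apply, spinP, Matrix.of_apply]
    split_ifs <;> simp [Complex.conj_ofReal]
  rw [hsM]
  simp only [spinP, Matrix.of_apply, flip, Fin.val_mk]
  rcases em ((l' : ℕ) = (L - 1 - (l : ℕ)) + 1) with hc | hc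
  · have hc2 : (l : ℕ) = (L - 1 - (l' : ℕ)) + 1 := by
      have := l.isLt; have := l'.isLt; omega
    rw [if_pos hc, if_pos hc2]
    have hb1 := l.isLt
    have hb2 := l'.isLt
    have cA : ((L - 1 - (l : ℕ) : ℕ) : ℝ) = (L : ℝ) - 1 - ((l : ℕ) : ℝ) := by
      rw [Nat.cast_sub (by omega), Nat.cast_sub (by omega), Nat.cast_one]
    have cB : ((L - 1 - (l' : ℕ) : ℕ) : ℝ) = (L : ℝ) - 1 - ((l' : ℕ) : ℝ) := by
      rw [Nat.cast_sub (by omega), Nat.cast_sub (by omega), Nat.cast_one]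
    rw [cA, cB]
    have hab : ((l : ℕ) : ℝ) + ((l' : ℕ) : ℝ) = (L : ℝ) := by
      exact_mod_cast (show ((l : ℕ) + (l' : ℕ) : ℕ) = L by omega)
    rw [show ((L : ℝ) - 1 - ((l : ℕ) : ℝ) + 1) * ((L : ℝ) - ((L : ℝ) - 1 - ((l : ℕ) : ℝ) + 1))
          = ((l : ℕ) : ℝ) * ((l' : ℕ) : ℝ) from by linear_combination (-((l : ℕ) : ℝ)) * hab,
        show ((L : ℝ) - 1 - ((l' : ℕ) : ℝ) + 1) * ((L : ℝ) - ((L : ℝ) - 1 - ((l' : ℕ) : ℝ) + 1))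
          = ((l : ℕ) : ℝ) * ((l' : ℕ) : ℝ) from by linear_combination (-((l' : ℕ) : ℝ)) * hab]
    rw [show L - 1 - (l' : ℕ) = (l : ℕ) - 1 from by omega]
    obtain ⟨m, hm⟩ : ∃ m, (l : ℕ) = m + 1 := ⟨(l : ℕ) - 1, by omega⟩
    rw [hm]
    simp only [Nat.add_sub_cancel, pow_succ]
    ring
  · have hc2 : ¬ ((l : ℕ) = (L - 1 - (l' : ℕ)) + 1) := by
      have := l.isLt; have := l'.isLt; omega
    rw [if_neg hc, if_neg hc2]
    ring


lemma coeM_sub (m n : Matrix (Fin L) (Fin L) ℂ) : coeM (m - n) = coeM m - coeM n := by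
  ext l l' : 2; simp [coeM]

lemma spinPT : (spinP L)ᵀ = spinM L := by
  ext l l' : 2
  simp only [Matrix.transpose_apply, spinM, Matrix.conjTranspose_apply, spinP, Matrix.of_apply]
  split_ifs <;> simp [Complex.conj_ofReal]

lemma spinMT : (spinM L)ᵀ = spinP L := by rw [← spinPT, Matrix.transpose_transpose]

lemma spin1T : (spin1 L)ᵀ = spin1 L := by
  rw [spin1, Matrix.transpose_smul, Matrix.transpose_add, spinPT, spinMT, add_comm]

lemma spin2T : (spin2 L)ᵀ = -(spin2 L) := by
  rw [spin2, Matrix.transpose_smul, Matrix.transpose_sub, spinPT, spinMT, ← smul_neg, neg_sub]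

lemma spin3T : (spin3 L)ᵀ = spin3 L := by
  ext l l' : 2
  simp only [Matrix.transpose_apply, spin3, Matrix.of_apply]
  rcases eq_or_ne l l' with rfl | hne
  · simp
  · simp [hne, hne.symm]

lemma spinP_eq : spinP L = spin1 L + Complex.I • spin2 L := by
  rw [spin1, spin2, smul_smul,
    show Complex.I * (Complex.I / 2) = -(2⁻¹ : ℂ) from by
      rw [mul_div_assoc', Complex.I_mul_I]; norm_num]
  module

lemma spinM_eq2 : spinM L = spin1 L - Complex.I • spin2 L := by
  rw [spin1, spin2, smul_smul,
    show Complex.I * (Complex.I / 2) = -(2⁻¹ : ℂ) from by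
      rw [mul_div_assoc', Complex.I_mul_I]; norm_num]
  module

end SU2Aux
open SU2Aux in
/-- Proposition 2.1, SU(2)-invariance reduction: if the BdG Hamiltonian
H = [[h, Δ], [-Δ̄, -h̄]] commutes with S^j for j = 1,2,3, then h = h_red ⊗ 1_L and
Δ = Δ_red ⊗ T. -/
theorem su2_invariant_reduction (L : ℕ) (hL : 1 ≤ L)
    (h Δ : Matrix (Fin L) (Fin L) Amod)
    (hinv : ∀ j : Fin 3, Smat L j * BdG h Δ = BdG h Δ * Smat L j) :
    ∃ hred Δred : Amod,
      (∀ l l' : Fin L, h l l' = if l = l' then hred else 0) ∧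
      (∀ l l' : Fin L, Δ l l' = Tmat L l l' • Δred) := by
  classical
  have block : ∀ j : Fin 3,
      coeM (spin L j) * h = h * coeM (spin L j) ∧
      coeM (spin L j) * Δ = -(Δ * coeM ((spin L j)ᵀ)) := by
    intro j
    have e := hinv j
    rw [Smat, BdG, Matrix.fromBlocks_multiply, Matrix.fromBlocks_multiply] at e
    constructor
    · have e1 := congrArg Matrix.toBlocks₁₁ e
      simpa [Matrix.toBlocks_fromBlocks₁₁] using e1
    · have e2 := congrArg Matrix.toBlocks₁₂ e
      simpa [Matrix.toBlocks_fromBlocks₁₂, mul_neg] using e2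
  -- h part
  have hp3 : coeM (spin3 L) * h = h * coeM (spin3 L) := by
    have e := (block 2).1
    rwa [show spin L 2 = spin3 L from rfl] at e
  have hpP : coeM (spinP L) * h = h * coeM (spinP L) := by
    have e1 := (block 0).1
    have e2 := (block 1).1
    rw [show spin L 0 = spin1 L from rfl] at e1
    rw [show spin L 1 = spin2 L from rfl] at e2
    rw [spinP_eq, coeM_add, coeM_smul, add_mul, mul_add, smul_mul_assoc, mul_smul_comm, e1, e2]
  -- Δ part
  have d3 : coeM (spin3 L) * Δ = -(Δ * coeM (spin3 L)) := by
    have e := (block 2).2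
    rwa [show spin L 2 = spin3 L from rfl, spin3T] at e
  have dP : coeM (spinP L) * Δ = -(Δ * coeM (spinM L)) := by
    have e1 := (block 0).2
    have e2 := (block 1).2
    rw [show spin L 0 = spin1 L from rfl, spin1T] at e1
    rw [show spin L 1 = spin2 L from rfl, spin2T, coeM_neg, mul_neg, neg_neg] at e2
    rw [spinP_eq, spinM_eq2, coeM_add, coeM_sub, coeM_smul, add_mul, smul_mul_assoc, e1, e2,
      mul_sub, mul_smul_comm, neg_sub]
    module
  have hschur := schur hL h hp3 hpP
  -- the reduced pairing
  set M := Δ * coeM (Tmat L) with hM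
  have m3 : coeM (spin3 L) * M = M * coeM (spin3 L) := by
    calc coeM (spin3 L) * M = (coeM (spin3 L) * Δ) * coeM (Tmat L) := by rw [hM, mul_assoc]
      _ = -(Δ * coeM (spin3 L)) * coeM (Tmat L) := by rw [d3]
      _ = Δ * coeM (-(spin3 L * Tmat L)) := by
          rw [coeM_neg, coeM_mul, neg_mul, mul_neg, mul_assoc]
      _ = Δ * coeM (Tmat L * spin3 L) := by rw [← Tmat_spin3]
      _ = M * coeM (spin3 L) := by rw [coeM_mul, hM, mul_assoc]
  have mP : coeM (spinP L) * M = M * coeM (spinP L) := by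
    calc coeM (spinP L) * M = (coeM (spinP L) * Δ) * coeM (Tmat L) := by rw [hM, mul_assoc]
      _ = -(Δ * coeM (spinM L)) * coeM (Tmat L) := by rw [dP]
      _ = Δ * coeM (-(spinM L * Tmat L)) := by
          rw [coeM_neg, coeM_mul, neg_mul, mul_neg, mul_assoc]
      _ = Δ * coeM (Tmat L * spinP L) := by rw [← Tmat_spinP]
      _ = M * coeM (spinP L) := by rw [coeM_mul, hM, mul_assoc]
  have mschur := schur hL M m3 mP
  refine ⟨h ⟨0, hL⟩ ⟨0, hL⟩, ((-1 : ℂ) ^ (L - 1)) • M ⟨0, hL⟩ ⟨0, hL⟩,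
    fun l l' => hschur l l', fun l l' => ?_⟩
  have key : M * coeM (Tmat L) = ((-1 : ℂ) ^ (L - 1)) • Δ := by
    rw [hM, mul_assoc, ← coeM_mul, Tmat_Tmat, coeM_smul, coeM_one, mul_smul_comm, mul_one]
  have e := congrFun (congrFun key l) l'
  rw [Matrix.mul_apply, Finset.sum_eq_single l] at e
  · rw [mschur l l, if_pos rfl,
      show (coeM (Tmat L)) l l' = algebraMap ℂ Amod (Tmat L l l') from rfl,
      ← Algebra.commutes, ← Algebra.smul_def, Matrix.smul_apply] at e
    have e2 : ((-1 : ℂ) ^ (L - 1)) • (Tmat L l l' • M ⟨0, hL⟩ ⟨0, hL⟩)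
        = ((-1 : ℂ) ^ (L - 1)) • (((-1 : ℂ) ^ (L - 1)) • Δ l l') := by rw [e]
    rw [smul_smul ((-1 : ℂ) ^ (L - 1)) ((-1 : ℂ) ^ (L - 1)), ← mul_pow] at e2
    norm_num at e2
    rw [← e2, smul_comm]
  · intro k _ hk
    rw [mschur l k, if_neg (fun hc => hk hc.symm), zero_mul]
  · intro hmem; exact absurd (Finset.mem_univ _) hmem
end
end

section
/- Let L ≥ 1 be an integer, let h, Δ be L×L matrices with entries in 𝔄, set H = [[h, Δ], [−Δ̄, −h̄]] and S³ = [[s³, 0], [0, −(s³)ᵀ]]. Then [S³, H] = 0 if and only if h is diagonal in the spin index (h_{l,l'} = 0 whenever l ≠ l') and Δ is cross-diagonal in the spin index (Δ_{l,l'} = 0 whenever l + l' ≠ L + 1). In that case there is a permutation matrix Π ∈ Mat_{2L}(ℂ) such that Π H Π* is block diagonal with L blocks of size 2×2 over 𝔄, the l-th block being [[h_{l,l}, Δ_{l,L+1−l}], [−(Δ_{L+1−l,l})‾, −(h_{L+1−l,L+1−l})‾]]. -/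
noncomputable section
open Matrix
set_option synthInstance.maxHeartbeats 1000000
set_option maxHeartbeats 1000000

noncomputable def Dop (L : ℕ) : Fin L → Amod :=
  fun l => algebraMap ℂ Amod (((L : ℂ) - 1 - 2 * (l : ℕ)) / 2)

lemma spin3_diag (L : ℕ) :
    spin3 L = Matrix.diagonal (fun l : Fin L => ((L : ℂ) - 1 - 2 * (l : ℕ)) / 2) := by
  ext l l'
  simp [spin3, Matrix.diagonal_apply]

lemma coeM_diag {L : ℕ} (v : Fin L → ℂ) :
    coeM (Matrix.diagonal v) = Matrix.diagonal (fun l => algebraMap ℂ Amod (v l)) := by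
  unfold coeM
  rw [Matrix.diagonal_map (map_zero _)]

lemma smat2_eq (L : ℕ) :
    Smat L 2 = Matrix.fromBlocks (Matrix.diagonal (Dop L)) 0 0 (-(Matrix.diagonal (Dop L))) := by
  show Matrix.fromBlocks (coeM (spin3 L)) 0 0 (-(coeM ((spin3 L)ᵀ))) = _
  rw [spin3_diag, Matrix.diagonal_transpose, coeM_diag]
  rfl

lemma opConj_apply (a : Amod) (ψ : Hilb) : opConj a ψ = star (a (star ψ)) := rfl

lemma opConj_zero : opConj 0 = 0 :=
  ContinuousLinearMap.ext fun ψ => by simp [opConj_apply]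

lemma central_mul (c : ℂ) (a : Amod) : algebraMap ℂ Amod c * a = c • a :=
  (Algebra.smul_def c a).symm

lemma mul_central (c : ℂ) (a : Amod) : a * algebraMap ℂ Amod c = c • a := by
  rw [← Algebra.commutes]; exact (Algebra.smul_def c a).symm

lemma comm_iff_blocks (L : ℕ) (h Δ : Matrix (Fin L) (Fin L) Amod) :
    (Smat L 2 * BdG h Δ = BdG h Δ * Smat L 2) ↔
      (Matrix.diagonal (Dop L) * h = h * Matrix.diagonal (Dop L)
      ∧ Matrix.diagonal (Dop L) * Δ = -(Δ * Matrix.diagonal (Dop L))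
      ∧ Matrix.diagonal (Dop L) * conjM Δ = -(conjM Δ * Matrix.diagonal (Dop L))
      ∧ Matrix.diagonal (Dop L) * conjM h = conjM h * Matrix.diagonal (Dop L)) := by
  rw [smat2_eq]
  unfold BdG
  rw [Matrix.fromBlocks_multiply, Matrix.fromBlocks_multiply]
  simp only [Matrix.zero_mul, Matrix.mul_zero, Matrix.neg_mul, Matrix.mul_neg,
    neg_neg, neg_zero, add_zero, zero_add, Matrix.fromBlocks_inj]


lemma diag_comm_iff (L : ℕ) (M : Matrix (Fin L) (Fin L) Amod) :
    Matrix.diagonal (Dop L) * M = M * Matrix.diagonal (Dop L) ↔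
      ∀ l l' : Fin L, l ≠ l' → M l l' = 0 := by
  rw [← Matrix.ext_iff]
  simp only [Matrix.diagonal_mul, Matrix.mul_diagonal, Dop, central_mul, mul_central]
  constructor
  · intro H l l' hne
    have h0 := H l l'
    have hz : ((((L : ℂ) - 1 - 2 * (l : ℕ)) / 2) - (((L : ℂ) - 1 - 2 * (l' : ℕ)) / 2)) • M l l'
        = 0 := by rw [sub_smul, h0, sub_self]
    have hc : ((((L : ℂ) - 1 - 2 * (l : ℕ)) / 2) - (((L : ℂ) - 1 - 2 * (l' : ℕ)) / 2)) ≠ 0 := by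
      have hne' : ((l' : ℕ) : ℂ) ≠ ((l : ℕ) : ℂ) := by
        intro hh
        exact hne (Fin.ext (Nat.cast_inj.mp hh).symm)
      intro hcontra
      apply hne'
      have : ((l' : ℕ) : ℂ) - ((l : ℕ) : ℂ) = 0 := by linear_combination hcontra
      exact sub_eq_zero.mp this
    exact ((smul_eq_zero.mp hz).resolve_left hc)
  · intro H l l'
    by_cases hll : l = l'
    · subst hll; rfl
    · rw [H l l' hll, smul_zero, smul_zero]

lemma diag_anticomm_iff (L : ℕ) (M : Matrix (Fin L) (Fin L) Amod) :
    Matrix.diagonal (Dop L) * M = -(M * Matrix.diagonal (Dop L)) ↔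
      ∀ l l' : Fin L, (l : ℕ) + (l' : ℕ) + 1 ≠ L → M l l' = 0 := by
  rw [← Matrix.ext_iff]
  have hentry : ∀ l l' : Fin L,
      (-(M * Matrix.diagonal (Dop L))) l l' = (-(((L : ℂ) - 1 - 2 * (l' : ℕ)) / 2)) • M l l' := by
    intro l l'
    simp only [Matrix.neg_apply, Matrix.mul_diagonal, Dop, mul_central, neg_smul]
  simp only [Matrix.diagonal_mul, Dop, central_mul, hentry]
  constructor
  · intro H l l' hne
    have h0 := H l l'
    have hz : ((((L : ℂ) - 1 - 2 * (l : ℕ)) / 2) + (((L : ℂ) - 1 - 2 * (l' : ℕ)) / 2)) • M l l'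
        = 0 := by rw [add_smul, h0]; simp
    have hc : ((((L : ℂ) - 1 - 2 * (l : ℕ)) / 2) + (((L : ℂ) - 1 - 2 * (l' : ℕ)) / 2)) ≠ 0 := by
      intro hcontra
      apply hne
      have : ((L : ℂ)) = (((l : ℕ) + (l' : ℕ) + 1 : ℕ) : ℂ) := by
        push_cast
        linear_combination hcontra
      exact (Nat.cast_inj.mp this).symm
    exact ((smul_eq_zero.mp hz).resolve_left hc)
  · intro H l l'
    by_cases hll : (l : ℕ) + (l' : ℕ) + 1 = L
    · have hLc : ((L : ℂ)) = ((l : ℕ) : ℂ) + ((l' : ℕ) : ℂ) + 1 := by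
        exact_mod_cast congrArg (Nat.cast : ℕ → ℂ) hll.symm
      have : (((L : ℂ) - 1 - 2 * (l : ℕ)) / 2) = -(((L : ℂ) - 1 - 2 * (l' : ℕ)) / 2) := by
        rw [hLc]; ring
      rw [this]
    · rw [H l l' hll, smul_zero, smul_zero]
/-- Proposition 2.2, U(1)-invariance reduction: [S³, H] = 0 iff h is
diagonal and Δ is cross-diagonal in the spin index; in that case H is conjugate, by a
permutation (of the 2L indices, i.e. by a permutation matrix Π ∈ Mat_{2L}(ℂ), realized here
as a relabelling of the indices by an equivalence `e`, so that `Π H Π* = H.submatrix e e`),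
to the block-diagonal matrix with L blocks of size 2×2, the l-th block being
[[h_{l,l}, Δ_{l,L+1-l}], [-(Δ_{L+1-l,l})‾, -(h_{L+1-l,L+1-l})‾]]. -/
theorem u1_invariant_reduction (L : ℕ) (hL : 1 ≤ L)
    (h Δ : Matrix (Fin L) (Fin L) Amod) :
    (Smat L 2 * BdG h Δ = BdG h Δ * Smat L 2 ↔
      ((∀ l l' : Fin L, l ≠ l' → h l l' = 0) ∧
        (∀ l l' : Fin L, (l : ℕ) + (l' : ℕ) + 2 ≠ L + 1 → Δ l l' = 0))) ∧
    (Smat L 2 * BdG h Δ = BdG h Δ * Smat L 2 →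
      ∃ e : (Fin 2 × Fin L) ≃ (Fin L ⊕ Fin L),
        (BdG h Δ).submatrix e e =
          Matrix.blockDiagonal (fun l : Fin L =>
            !![h l l, Δ l l.rev;
               -(opConj (Δ l.rev l)), -(opConj (h l.rev l.rev))])) := by
  have key : Smat L 2 * BdG h Δ = BdG h Δ * Smat L 2 ↔
      ((∀ l l' : Fin L, l ≠ l' → h l l' = 0) ∧
        (∀ l l' : Fin L, (l : ℕ) + (l' : ℕ) + 2 ≠ L + 1 → Δ l l' = 0)) := by
    rw [comm_iff_blocks]
    constructor
    · rintro ⟨h1, h2, -, -⟩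
      refine ⟨(diag_comm_iff L h).mp h1, fun l l' hne => ?_⟩
      exact (diag_anticomm_iff L Δ).mp h2 l l' (by omega)
    · rintro ⟨hh, hΔ⟩
      refine ⟨(diag_comm_iff L h).mpr hh,
        (diag_anticomm_iff L Δ).mpr (fun l l' hne => hΔ l l' (by omega)), ?_, ?_⟩
      · refine (diag_anticomm_iff L (conjM Δ)).mpr (fun l l' hne => ?_)
        show opConj (Δ l l') = 0
        rw [hΔ l l' (by omega), opConj_zero]
      · refine (diag_comm_iff L (conjM h)).mpr (fun l l' hne => ?_)
        show opConj (h l l') = 0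
        rw [hh l l' hne, opConj_zero]
  refine ⟨key, fun hc => ?_⟩
  obtain ⟨hdiag, hcross⟩ := key.mp hc
  refine ⟨⟨fun p => ![Sum.inl p.2, Sum.inr p.2.rev] p.1,
      Sum.elim (fun l => (0, l)) (fun l => (1, l.rev)), ?_, ?_⟩, ?_⟩
  · rintro ⟨i, l⟩
    fin_cases i <;> simp
  · rintro (l | l) <;> simp
  · refine Matrix.ext fun p q => ?_
    obtain ⟨i, l⟩ := p
    obtain ⟨i', l'⟩ := q
    fin_cases i <;> fin_cases i' <;>
      simp only [Matrix.submatrix_apply, Equiv.coe_fn_mk, Fin.mk_zero, Fin.mk_one,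
        Matrix.cons_val_zero, Matrix.cons_val_one, Matrix.head_cons,
        Matrix.blockDiagonal_apply, BdG, Matrix.fromBlocks_apply₁₁, Matrix.fromBlocks_apply₁₂,
        Matrix.fromBlocks_apply₂₁, Matrix.fromBlocks_apply₂₂, Matrix.neg_apply, conjM,
        Matrix.map_apply, Matrix.cons_val', Matrix.empty_val', Matrix.cons_val_fin_one,
        Matrix.of_apply]
    · split_ifs with hll
      · subst hll; rfl
      · exact hdiag l l' hll
    · split_ifs with hll
      · subst hll; rfl
      · refine hcross l l'.rev ?_
        have h1 : (l : ℕ) < L := l.isLt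
        have h2 : (l' : ℕ) < L := l'.isLt
        have h3 : (l'.rev : ℕ) = L - ((l' : ℕ) + 1) := rfl
        have h4 : (l : ℕ) ≠ (l' : ℕ) := fun hh => hll (Fin.ext hh)
        omega
    · split_ifs with hll
      · subst hll; rfl
      · have hz : Δ l.rev l' = 0 := by
          refine hcross l.rev l' ?_
          have h1 : (l : ℕ) < L := l.isLt
          have h2 : (l' : ℕ) < L := l'.isLt
          have h3 : (l.rev : ℕ) = L - ((l : ℕ) + 1) := rfl
          have h4 : (l : ℕ) ≠ (l' : ℕ) := fun hh => hll (Fin.ext hh)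
          omega
        rw [hz, opConj_zero, neg_zero]
    · split_ifs with hll
      · subst hll; rfl
      · have hz : h l.rev l'.rev = 0 := by
          refine hdiag l.rev l'.rev (fun hh => hll ?_)
          have := congrArg Fin.rev hh
          rwa [Fin.rev_rev, Fin.rev_rev] at this
        rw [hz, opConj_zero, neg_zero]
end
end

section
/- Let L ≥ 1 be an integer and let Δ be an L×L matrix with entries in 𝔄 of the form Δ_{l,l'} = T_{l,l'}·Δ_red for some Δ_red ∈ 𝔄. If Δ satisfies the particle–hole constraint Δ* = −Δ̄ (entrywise: (Δ_{l',l})* = −(Δ_{l,l'})‾ for all l, l'), then the operator transpose of Δ_red satisfies (Δ_red)ᵀ = −Δ_red if L is odd (integer spin), and (Δ_red)ᵀ = Δ_red if L is even (half-integer spin). -/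
noncomputable section
open Matrix
set_option synthInstance.maxHeartbeats 1000000
set_option maxHeartbeats 1000000

lemma opConj_smul (c : ℂ) (a : Amod) :
    opConj (c • a) = (starRingEnd ℂ c) • opConj a := by
  ext ψ
  simp [opConj_apply, star_smul]

/-- if Δ = Δ_red ⊗ T satisfies the particle-hole constraint Δ* = -Δ̄, then
Δ_red is anti-symmetric (w.r.t. the operator transpose) for odd L (integer spin) and
symmetric for even L (half-integer spin). -/
theorem pairing_potential_symmetry (L : ℕ) (hL : 1 ≤ L)
    (Δ : Matrix (Fin L) (Fin L) Amod) (Δred : Amod)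
    (hform : ∀ l l' : Fin L, Δ l l' = Tmat L l l' • Δred)
    (hphs : ∀ l l' : Fin L, star (Δ l' l) = -(opConj (Δ l l'))) :
    (Odd L → opTrans Δred = -Δred) ∧ (Even L → opTrans Δred = Δred) := by
  have hl : (0 : ℕ) < L := hL
  set l : Fin L := ⟨0, hl⟩
  set l' : Fin L := ⟨L - 1, Nat.sub_lt hl one_pos⟩
  have hsum : (l : ℕ) + (l' : ℕ) + 1 = L := by
    simp only [l, l']
    omega
  have hsum' : (l' : ℕ) + (l : ℕ) + 1 = L := by omega
  have hL1 : L - 1 + 1 = L := by omega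
  have hT1 : Tmat L l l' = 1 := by
    simp [Tmat, hsum, l, l', hL1]
  have hT2 : Tmat L l' l = (-1 : ℂ) ^ (L - 1) := by
    simp [Tmat, hsum', l', hL1]
  have key := hphs l l'
  rw [hform l l', hform l' l, hT1, hT2, one_smul] at key
  have hreal : star ((-1 : ℂ) ^ (L - 1)) = (-1 : ℂ) ^ (L - 1) := by
    simp
  rw [star_smul] at key
  have key2 : ((-1 : ℂ) ^ (L - 1)) • star Δred = -(opConj Δred) := by
    rw [← key]
    congr 1
    simp
  have key3 : Δred = ((-1 : ℂ) ^ L) • opTrans Δred := by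
    have := congrArg star key2
    rw [star_smul, star_star, star_neg, hreal] at this
    have hLL : (-1 : ℂ) ^ L = -((-1 : ℂ) ^ (L - 1)) := by
      have h2 : (-1 : ℂ) ^ (L - 1 + 1) = -((-1 : ℂ) ^ (L - 1)) := by
        rw [pow_succ]; ring
      rwa [hL1] at h2
    calc Δred = ((-1 : ℂ) ^ (L-1) * (-1 : ℂ) ^ (L-1)) • Δred := by
            rw [← pow_add, Even.neg_one_pow ⟨L - 1, rfl⟩, one_smul]
      _ = ((-1 : ℂ) ^ (L-1)) • (((-1 : ℂ) ^ (L-1)) • Δred) := by rw [smul_smul]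
      _ = ((-1 : ℂ) ^ (L-1)) • (-(star (opConj Δred))) := by rw [this]
      _ = ((-1 : ℂ) ^ L) • opTrans Δred := by
            rw [hLL, opTrans, neg_smul, smul_neg]
  constructor
  · intro hodd
    rw [hodd.neg_one_pow] at key3
    rw [show opTrans Δred = -((-1 : ℂ) • opTrans Δred) by simp, ← key3]
  · intro heven
    rw [heven.neg_one_pow, one_smul] at key3
    exact key3.symm
end
end

section
/- Let n ≥ 1, let H, P, P' ∈ Mat_n(ℂ) be Hermitian and β ∈ ℝ. For δ > 0 the linear map δ + L_H on Mat_n(ℂ) is bijective, and the Kubo coefficient σ_{P,P'}(β,δ) = ½·Tr( L_P(f_β(H)) · (δ + L_H)⁻¹( L_{P'}(H) ) ) converges as δ → 0⁺; moreover the Onsager relation holds in the limit: lim_{δ→0⁺} σ_{P,P'}(β,δ) = − lim_{δ→0⁺} σ_{P',P}(β,δ). -/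
noncomputable section
open Matrix

/-- The Liouvillian L_A(X) = i(XA - AX). -/
noncomputable def Liouv {n : ℕ} (A : Matrix (Fin n) (Fin n) ℂ) :
    Matrix (Fin n) (Fin n) ℂ →ₗ[ℂ] Matrix (Fin n) (Fin n) ℂ where
  toFun X := Complex.I • (X * A - A * X)
  map_add' X Y := by
    simp only [add_mul, mul_add, smul_add, smul_sub]
    module
  map_smul' c X := by
    simp only [RingHom.id_apply, smul_mul_assoc, mul_smul_comm, smul_sub]
    module

/-- The Fermi-Dirac function f_β(H) = (1 + exp(βH))⁻¹ of a matrix. -/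
noncomputable def fermiDirac {n : ℕ} (β : ℝ) (H : Matrix (Fin n) (Fin n) ℂ) :
    Matrix (Fin n) (Fin n) ℂ :=
  (1 + NormedSpace.exp ((β : ℂ) • H))⁻¹

namespace KuboAux

lemma Liouv_apply {n : ℕ} (A X : Matrix (Fin n) (Fin n) ℂ) :
    Liouv A X = Complex.I • (X * A - A * X) := rfl

/-- Numerator of the (j,k) term of the Kubo trace in the eigenbasis. -/
def numTerm {n : ℕ} (U : Matrix (Fin n) (Fin n) ℂ) (d φ : Fin n → ℝ)
    (Q R : Matrix (Fin n) (Fin n) ℂ) (j k : Fin n) : ℂ :=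
  (Complex.I * ((φ j : ℂ) - (φ k : ℂ)) * (star U * Q * U) j k) *
    (Complex.I * ((d k : ℂ) - (d j : ℂ)) * (star U * R * U) k j)

/-- Limit of the (j,k) term as δ → 0⁺. -/
def limTerm {n : ℕ} (U : Matrix (Fin n) (Fin n) ℂ) (d φ : Fin n → ℝ)
    (Q R : Matrix (Fin n) (Fin n) ℂ) (j k : Fin n) : ℂ :=
  if d j = d k then 0 else
    numTerm U d φ Q R j k / (Complex.I * ((d j : ℂ) - (d k : ℂ)))

lemma limTerm_anti {n : ℕ} (U : Matrix (Fin n) (Fin n) ℂ) (d φ : Fin n → ℝ)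
    (Q R : Matrix (Fin n) (Fin n) ℂ) :
    ∑ j, ∑ k, limTerm U d φ R Q j k = -∑ j, ∑ k, limTerm U d φ Q R j k := by
  have key : ∀ j k, limTerm U d φ R Q k j = -limTerm U d φ Q R j k := by
    intro j k
    by_cases h : d j = d k
    · simp only [limTerm, if_pos h, if_pos h.symm, neg_zero]
    · have h' : ¬ d k = d j := fun hc => h hc.symm
      simp only [limTerm, numTerm, if_neg h, if_neg h']
      have e : Complex.I * ((d k : ℂ) - (d j : ℂ)) = -(Complex.I * ((d j : ℂ) - (d k : ℂ))) := by
        ring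
      rw [e, div_neg, neg_inj]
      congr 1
      ring
  rw [Finset.sum_comm]
  rw [← Finset.sum_neg_distrib]
  refine Finset.sum_congr rfl fun j _ => ?_
  rw [← Finset.sum_neg_distrib]
  exact Finset.sum_congr rfl fun k _ => key j k

theorem aux_main {n : ℕ} (U : Matrix (Fin n) (Fin n) ℂ)
    (hU1 : star U * U = 1) (hU2 : U * star U = 1)
    (d φ : Fin n → ℝ) (H : Matrix (Fin n) (Fin n) ℂ)
    (hHU : H = U * diagonal (fun j => (d j : ℂ)) * star U)
    (f : Matrix (Fin n) (Fin n) ℂ)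
    (hfU : f = U * diagonal (fun j => (φ j : ℂ)) * star U)
    (Q R : Matrix (Fin n) (Fin n) ℂ) :
    (∀ δ : ℝ, 0 < δ →
      Function.Bijective (fun X : Matrix (Fin n) (Fin n) ℂ => δ • X + Liouv H X)) ∧
    Filter.Tendsto (fun δ : ℝ =>
        (1 / 2 : ℂ) * Matrix.trace (Liouv Q f *
          Function.invFun (fun X : Matrix (Fin n) (Fin n) ℂ => δ • X + Liouv H X)
            (Liouv R H)))
      (nhdsWithin 0 (Set.Ioi 0))
      (nhds ((1 / 2 : ℂ) * ∑ j, ∑ k, limTerm U d φ Q R j k)) := by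
  set D : Matrix (Fin n) (Fin n) ℂ := diagonal (fun j => (d j : ℂ)) with hD
  -- basic conjugation identities
  have huyu : ∀ Y : Matrix (Fin n) (Fin n) ℂ, U * (star U * Y * U) * star U = Y := by
    intro Y
    simp only [Matrix.mul_assoc]
    rw [hU2, Matrix.mul_one, ← Matrix.mul_assoc, hU2, Matrix.one_mul]
  have huyu' : ∀ Y : Matrix (Fin n) (Fin n) ℂ, star U * (U * Y * star U) * U = Y := by
    intro Y
    simp only [Matrix.mul_assoc]
    rw [hU1, Matrix.mul_one, ← Matrix.mul_assoc, hU1, Matrix.one_mul]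
  have conj_mul : ∀ X Y : Matrix (Fin n) (Fin n) ℂ,
      (star U * X * U) * (star U * Y * U) = star U * (X * Y) * U := by
    intro X Y
    simp only [Matrix.mul_assoc]
    rw [← Matrix.mul_assoc U (star U), hU2, Matrix.one_mul]
  have hden : ∀ (δ : ℝ), 0 < δ → ∀ a b : ℝ,
      ((δ : ℂ) + Complex.I * ((a : ℂ) - (b : ℂ))) ≠ 0 := by
    intro δ hδ a b h
    have := congrArg Complex.re h
    simp [Complex.add_re, Complex.mul_re] at this
    exact hδ.ne' this
  -- the action of δ + L_H on conjugated matrices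
  have hact : ∀ (δ : ℝ) (M : Matrix (Fin n) (Fin n) ℂ),
      δ • (U * M * star U) + Liouv H (U * M * star U)
        = U * (Matrix.of fun j k =>
            (((δ : ℂ) + Complex.I * ((d k : ℂ) - (d j : ℂ))) * M j k)) * star U := by
    intro δ M
    rw [Liouv_apply, hHU]
    have h1 : (U * M * star U) * (U * D * star U) = U * (M * D) * star U := by
      simp only [Matrix.mul_assoc]
      rw [← Matrix.mul_assoc (star U) U, hU1, Matrix.one_mul]
    have h2 : (U * D * star U) * (U * M * star U) = U * (D * M) * star U := by
      simp only [Matrix.mul_assoc]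
      rw [← Matrix.mul_assoc (star U) U, hU1, Matrix.one_mul]
    rw [h1, h2, ← Matrix.sub_mul, ← Matrix.mul_sub]
    have h3 : U * (δ • M) * star U = δ • (U * M * star U) := by
      rw [Matrix.mul_smul, Matrix.smul_mul]
    have h4 : U * (Complex.I • (M * D - D * M)) * star U
        = Complex.I • (U * (M * D - D * M) * star U) := by
      rw [Matrix.mul_smul, Matrix.smul_mul]
    rw [← h3, ← h4, ← Matrix.add_mul, ← Matrix.mul_add]
    congr 1
    congr 1
    ext j k
    simp only [Matrix.add_apply, Matrix.smul_apply, Matrix.sub_apply, Matrix.mul_diagonal,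
      Matrix.diagonal_mul, Matrix.of_apply, smul_eq_mul, Complex.real_smul, hD]
    ring
  -- the explicit solution
  set sol : ℝ → Matrix (Fin n) (Fin n) ℂ → Matrix (Fin n) (Fin n) ℂ := fun δ Y =>
    U * (Matrix.of fun j k =>
      (star U * Y * U) j k / ((δ : ℂ) + Complex.I * ((d k : ℂ) - (d j : ℂ)))) * star U
    with hsol_def
  have hsol : ∀ (δ : ℝ), 0 < δ → ∀ Y : Matrix (Fin n) (Fin n) ℂ,
      δ • sol δ Y + Liouv H (sol δ Y) = Y := by
    intro δ hδ Y
    rw [hsol_def]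
    rw [hact]
    have : (Matrix.of fun j k =>
        (((δ : ℂ) + Complex.I * ((d k : ℂ) - (d j : ℂ))) *
          (Matrix.of fun j k =>
            (star U * Y * U) j k / ((δ : ℂ) + Complex.I * ((d k : ℂ) - (d j : ℂ)))) j k))
        = star U * Y * U := by
      ext j k
      simp only [Matrix.of_apply]
      rw [mul_div_cancel₀ _ (hden δ hδ (d k) (d j))]
    rw [this, huyu]
  -- injectivity
  have hinj : ∀ (δ : ℝ), 0 < δ →
      Function.Injective (fun X : Matrix (Fin n) (Fin n) ℂ => δ • X + Liouv H X) := by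
    intro δ hδ X X' h
    simp only at h
    rw [← huyu X, ← huyu X', hact, hact] at h
    have h2 := congrArg (fun Z => star U * Z * U) h
    simp only [huyu'] at h2
    have h3 : ∀ j k, (star U * X * U) j k = (star U * X' * U) j k := by
      intro j k
      have h4 := congrFun (congrFun h2 j) k
      simp only [Matrix.of_apply] at h4
      exact mul_left_cancel₀ (hden δ hδ (d k) (d j)) h4
    have h5 : star U * X * U = star U * X' * U := by
      ext j k; exact h3 j k
    calc X = U * (star U * X * U) * star U := (huyu X).symm
      _ = U * (star U * X' * U) * star U := by rw [h5]
      _ = X' := huyu X'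
  have hbij : ∀ δ : ℝ, 0 < δ →
      Function.Bijective (fun X : Matrix (Fin n) (Fin n) ℂ => δ • X + Liouv H X) :=
    fun δ hδ => ⟨hinj δ hδ, fun Y => ⟨sol δ Y, hsol δ hδ Y⟩⟩
  refine ⟨hbij, ?_⟩
  -- identify invFun with sol
  have hinv : ∀ (δ : ℝ), 0 < δ →
      Function.invFun (fun X : Matrix (Fin n) (Fin n) ℂ => δ • X + Liouv H X) (Liouv R H)
        = sol δ (Liouv R H) := by
    intro δ hδ
    have := Function.leftInverse_invFun (hinj δ hδ) (sol δ (Liouv R H))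
    simp only [hsol δ hδ (Liouv R H)] at this
    exact this
  -- conjugated forms of the two Liouvillians
  have c1 : ∀ G Y : Matrix (Fin n) (Fin n) ℂ,
      star U * ((U * G * star U) * Y) * U = G * (star U * Y * U) := by
    intro G Y
    simp only [Matrix.mul_assoc]
    rw [← Matrix.mul_assoc (star U) U, hU1, Matrix.one_mul]
  have c2 : ∀ G Y : Matrix (Fin n) (Fin n) ℂ,
      star U * (Y * (U * G * star U)) * U = (star U * Y * U) * G := by
    intro G Y
    simp only [Matrix.mul_assoc]
    rw [hU1, Matrix.mul_one]
  have hA : star U * (Liouv Q f) * U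
      = Complex.I • (diagonal (fun j => (φ j : ℂ)) * (star U * Q * U)
        - (star U * Q * U) * diagonal (fun j => (φ j : ℂ))) := by
    rw [Liouv_apply, hfU, Matrix.mul_smul, Matrix.smul_mul, Matrix.mul_sub, Matrix.sub_mul,
      c1, c2]
  have hB : star U * (Liouv R H) * U
      = Complex.I • (D * (star U * R * U) - (star U * R * U) * D) := by
    rw [Liouv_apply, hHU, Matrix.mul_smul, Matrix.smul_mul, Matrix.mul_sub, Matrix.sub_mul,
      c1, c2]
  -- the explicit trace formula for δ > 0
  have htr : ∀ (δ : ℝ), 0 < δ →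
      Matrix.trace (Liouv Q f * sol δ (Liouv R H))
        = ∑ j, ∑ k, numTerm U d φ Q R j k /
            ((δ : ℂ) + Complex.I * ((d j : ℂ) - (d k : ℂ))) := by
    intro δ hδ
    rw [hsol_def]
    set M : Matrix (Fin n) (Fin n) ℂ := Matrix.of fun j k =>
      (star U * Liouv R H * U) j k / ((δ : ℂ) + Complex.I * ((d k : ℂ) - (d j : ℂ))) with hM
    have e1 : Liouv Q f * (U * M * star U) = (Liouv Q f * U * M) * star U := by
      simp only [Matrix.mul_assoc]
    rw [e1, Matrix.trace_mul_comm]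
    have e2 : star U * (Liouv Q f * U * M) = (star U * Liouv Q f * U) * M := by
      simp only [Matrix.mul_assoc]
    rw [e2]
    have e3 : Matrix.trace ((star U * Liouv Q f * U) * M)
        = ∑ j, ∑ k, (star U * Liouv Q f * U) j k * M k j := by
      simp [Matrix.trace, Matrix.diag, Matrix.mul_apply]
    rw [e3]
    refine Finset.sum_congr rfl fun j _ => Finset.sum_congr rfl fun k _ => ?_
    have eA : (star U * Liouv Q f * U) j k
        = Complex.I * ((φ j : ℂ) - (φ k : ℂ)) * (star U * Q * U) j k := by
      rw [hA]
      simp only [Matrix.smul_apply, Matrix.sub_apply, Matrix.diagonal_mul, Matrix.mul_diagonal,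
        smul_eq_mul]
      ring
    have eB : (star U * Liouv R H * U) k j
        = Complex.I * ((d k : ℂ) - (d j : ℂ)) * (star U * R * U) k j := by
      rw [hB]
      simp only [Matrix.smul_apply, Matrix.sub_apply, Matrix.diagonal_mul, Matrix.mul_diagonal,
        smul_eq_mul, hD]
      ring
    rw [hM]
    simp only [Matrix.of_apply, eA, eB, numTerm]
    ring
  -- termwise convergence
  have hterm : ∀ j k : Fin n,
      Filter.Tendsto (fun δ : ℝ => numTerm U d φ Q R j k /
          ((δ : ℂ) + Complex.I * ((d j : ℂ) - (d k : ℂ))))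
        (nhdsWithin 0 (Set.Ioi 0)) (nhds (limTerm U d φ Q R j k)) := by
    intro j k
    by_cases h : d j = d k
    · have hnum : numTerm U d φ Q R j k = 0 := by
        simp [numTerm, h]
      simp only [hnum, zero_div, limTerm, if_pos h]
      exact tendsto_const_nhds
    · have hne : Complex.I * ((d j : ℂ) - (d k : ℂ)) ≠ 0 := by
        refine mul_ne_zero Complex.I_ne_zero (sub_ne_zero.2 fun hc => h ?_)
        exact_mod_cast hc
      have hd : Filter.Tendsto (fun δ : ℝ => ((δ : ℂ) + Complex.I * ((d j : ℂ) - (d k : ℂ))))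
          (nhdsWithin 0 (Set.Ioi 0)) (nhds (Complex.I * ((d j : ℂ) - (d k : ℂ)))) := by
        have h0 : Filter.Tendsto (fun δ : ℝ => (δ : ℂ)) (nhdsWithin 0 (Set.Ioi 0))
            (nhds 0) := by
          have := (Complex.continuous_ofReal.tendsto 0).mono_left
            (nhdsWithin_le_nhds (s := Set.Ioi (0:ℝ)))
          simpa using this
        simpa using h0.add (tendsto_const_nhds (x := Complex.I * ((d j : ℂ) - (d k : ℂ))))
      have := Filter.Tendsto.div (tendsto_const_nhds (x := numTerm U d φ Q R j k)) hd hne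
      simp only [limTerm, if_neg h]
      exact this
  -- assemble
  have hsum : Filter.Tendsto (fun δ : ℝ => ∑ j, ∑ k, numTerm U d φ Q R j k /
        ((δ : ℂ) + Complex.I * ((d j : ℂ) - (d k : ℂ))))
      (nhdsWithin 0 (Set.Ioi 0)) (nhds (∑ j, ∑ k, limTerm U d φ Q R j k)) := by
    refine tendsto_finset_sum _ fun j _ => ?_
    exact tendsto_finset_sum _ fun k _ => hterm j k
  have hfinal := hsum.const_mul ((1 : ℂ) / 2)
  refine Filter.Tendsto.congr' ?_ hfinal
  filter_upwards [self_mem_nhdsWithin] with δ hδ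
  rw [hinv δ hδ, htr δ hδ]
end KuboAux

/-- Kubo formula and Onsager relation: for Hermitian H, P, P' and β ∈ ℝ,
the superoperator δ + L_H is bijective for δ > 0, the Kubo coefficient
σ_{P,P'}(β,δ) = ½·Tr(L_P(f_β(H))·(δ + L_H)⁻¹(L_{P'}(H))) converges as δ → 0⁺, and the
Onsager relation lim σ_{P,P'} = -lim σ_{P',P} holds. -/
theorem kubo_onsager (n : ℕ) (hn : 1 ≤ n)
    (H P P' : Matrix (Fin n) (Fin n) ℂ)
    (hH : H.IsHermitian) (hP : P.IsHermitian) (hP' : P'.IsHermitian) (β : ℝ) :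
    (∀ δ : ℝ, 0 < δ →
      Function.Bijective (fun X : Matrix (Fin n) (Fin n) ℂ => δ • X + Liouv H X)) ∧
    ∃ c : ℂ,
      Filter.Tendsto (fun δ : ℝ =>
          (1 / 2 : ℂ) * Matrix.trace (Liouv P (fermiDirac β H) *
            Function.invFun (fun X : Matrix (Fin n) (Fin n) ℂ => δ • X + Liouv H X)
              (Liouv P' H)))
        (nhdsWithin 0 (Set.Ioi 0)) (nhds c) ∧
      Filter.Tendsto (fun δ : ℝ =>
          (1 / 2 : ℂ) * Matrix.trace (Liouv P' (fermiDirac β H) *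
            Function.invFun (fun X : Matrix (Fin n) (Fin n) ℂ => δ • X + Liouv H X)
              (Liouv P H)))
        (nhdsWithin 0 (Set.Ioi 0)) (nhds (-c)) := by
  classical
  set U : Matrix (Fin n) (Fin n) ℂ := (hH.eigenvectorUnitary : Matrix (Fin n) (Fin n) ℂ) with hU
  set d : Fin n → ℝ := hH.eigenvalues with hd
  set φ : Fin n → ℝ := fun j => (1 + Real.exp (β * d j))⁻¹ with hφ
  have hU1 : star U * U = 1 := Unitary.coe_star_mul_self hH.eigenvectorUnitary
  have hU2 : U * star U = 1 := Unitary.coe_mul_star_self hH.eigenvectorUnitary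
  have hHU : H = U * diagonal (fun j => (d j : ℂ)) * star U := by
    convert hH.spectral_theorem using 2
    rfl
  -- Fermi-Dirac in the eigenbasis
  have hfU : fermiDirac β H = U * diagonal (fun j => (φ j : ℂ)) * star U := by
    have hUinv : U⁻¹ = star U := Matrix.inv_eq_right_inv hU2
    have hUu : IsUnit U := ⟨⟨U, star U, hU2, hU1⟩, rfl⟩
    set w : Fin n → ℂ := fun j => ((1 + Real.exp (β * d j) : ℝ) : ℂ) with hw
    have hwne : ∀ j, w j ≠ 0 := by
      intro j
      rw [hw]
      simp only [ne_eq, Complex.ofReal_eq_zero]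
      positivity
    have hsmul : (β : ℂ) • H = U * diagonal (fun j => ((β * d j : ℝ) : ℂ)) * star U := by
      rw [hHU]
      have hdiag : diagonal (fun j => ((β * d j : ℝ) : ℂ))
          = (β : ℂ) • diagonal (fun j => ((d j : ℝ) : ℂ)) := by
        ext j k
        rcases eq_or_ne j k with rfl | hjk
        · simp only [Matrix.diagonal_apply_eq, Matrix.smul_apply, smul_eq_mul]
          push_cast
          ring
        · simp [Matrix.diagonal_apply_ne _ hjk]
      rw [hdiag]
      have hcomm : U * ((β : ℂ) • diagonal (fun j => ((d j : ℝ) : ℂ))) * star U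
          = (β : ℂ) • (U * diagonal (fun j => ((d j : ℝ) : ℂ)) * star U) := by
        rw [Matrix.mul_smul, Matrix.smul_mul]
      rw [hcomm]
    have hexp : NormedSpace.exp ((β : ℂ) • H)
        = U * diagonal (fun j => (Real.exp (β * d j) : ℂ)) * star U := by
      rw [hsmul, ← hUinv, Matrix.exp_conj U (diagonal fun j => ((β * d j : ℝ) : ℂ)) hUu, Matrix.exp_diagonal]
      have hexps : NormedSpace.exp (fun j => ((β * d j : ℝ) : ℂ))
          = fun j => ((Real.exp (β * d j) : ℝ) : ℂ) := by
        funext j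
        rw [Pi.coe_exp, ← Complex.exp_eq_exp_ℂ, Complex.ofReal_exp]
      rw [hexps]
    have hone : (1 : Matrix (Fin n) (Fin n) ℂ) + NormedSpace.exp ((β : ℂ) • H)
        = U * diagonal w * star U := by
      rw [hexp]
      have h1 : (1 : Matrix (Fin n) (Fin n) ℂ) = U * 1 * star U := by
        rw [Matrix.mul_one, hU2]
      rw [h1, ← Matrix.add_mul, ← Matrix.mul_add]
      congr 2
      rw [← Matrix.diagonal_one, Matrix.diagonal_add]
      congr 1
      funext j
      rw [hw]
      push_cast
      ring
    rw [fermiDirac, hone]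
    have hinv2 : (U * diagonal w * star U) * (U * diagonal (fun j => (φ j : ℂ)) * star U)
        = 1 := by
      have e : (U * diagonal w * star U) * (U * diagonal (fun j => (φ j : ℂ)) * star U)
          = U * (diagonal w * diagonal (fun j => (φ j : ℂ))) * star U := by
        simp only [Matrix.mul_assoc]
        rw [← Matrix.mul_assoc (star U) U, hU1, Matrix.one_mul]
      rw [e, Matrix.diagonal_mul_diagonal]
      have : (fun j => w j * (φ j : ℂ)) = fun _ => (1 : ℂ) := by
        funext j
        have hpos : (1 + Real.exp (β * d j)) ≠ 0 := by positivity
        show (((1 + Real.exp (β * d j)) : ℝ) : ℂ) * (((1 + Real.exp (β * d j))⁻¹ : ℝ) : ℂ) = 1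
        rw [← Complex.ofReal_mul, mul_inv_cancel₀ hpos, Complex.ofReal_one]
      rw [this, Matrix.diagonal_one, Matrix.mul_one, hU2]
    exact Matrix.inv_eq_right_inv hinv2
  obtain ⟨hbij, htend1⟩ := KuboAux.aux_main U hU1 hU2 d φ H hHU (fermiDirac β H) hfU P P'
  obtain ⟨_, htend2⟩ := KuboAux.aux_main U hU1 hU2 d φ H hHU (fermiDirac β H) hfU P' P
  refine ⟨hbij, ⟨(1 / 2 : ℂ) * ∑ j, ∑ k, KuboAux.limTerm U d φ P P' j k, htend1, ?_⟩⟩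
  have hanti := KuboAux.limTerm_anti U d φ P P'
  rw [show -((1 / 2 : ℂ) * ∑ j, ∑ k, KuboAux.limTerm U d φ P P' j k)
      = (1 / 2 : ℂ) * ∑ j, ∑ k, KuboAux.limTerm U d φ P' P j k by rw [hanti]; ring]
  exact htend2
end
end

section
/- Let n ≥ 1, let H, P ∈ Mat_n(ℂ) be Hermitian, J ∈ Mat_n(ℂ) arbitrary, β ∈ ℝ, δ > 0 and λ ∈ ℝ. Then the linear map δ − L_H − λ·L_P on Mat_n(ℂ) is bijective, as is δ + L_H + λ·L_P, and the exact linear-response identity holds: (δ/2)·Tr( (δ − L_H − λ·L_P)⁻¹( f_β(H) ) · J ) = ½·Tr( f_β(H)·J ) + (λ/2)·Tr( L_P(f_β(H)) · (δ + L_H + λ·L_P)⁻¹( J ) ). In particular, the time-averaged current is, to first order in λ, equal to λ times the Kubo formula ½·Tr( L_P(f_β(H)) · (δ + L_H)⁻¹(J) ). -/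
noncomputable section
open Matrix

namespace LinResAux

variable {n : ℕ}

lemma liouv_apply (A X : Matrix (Fin n) (Fin n) ℂ) :
    Liouv A X = Complex.I • (X * A - A * X) := rfl

lemma liouv_eq (A B X : Matrix (Fin n) (Fin n) ℂ) (c : ℂ) :
    Liouv A X + c • Liouv B X = Liouv (A + c • B) X := by
  simp only [liouv_apply, smul_sub, mul_add, add_mul, mul_smul_comm, smul_mul_assoc, smul_smul]
  module

lemma liouv_neg (A X : Matrix (Fin n) (Fin n) ℂ) : Liouv (-A) X = - Liouv A X := by
  simp only [liouv_apply, mul_neg, neg_mul, smul_sub, smul_neg]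
  module

lemma real_smul_eq (r : ℝ) (M : Matrix (Fin n) (Fin n) ℂ) : r • M = (r : ℂ) • M := by
  ext i j; simp [Complex.real_smul]

/-- trace antisymmetry of the Liouvillian -/
lemma trace_liouv_mul (A X Y : Matrix (Fin n) (Fin n) ℂ) :
    trace (Liouv A X * Y) = - trace (X * Liouv A Y) := by
  simp only [liouv_apply, Matrix.smul_mul, Matrix.mul_smul, sub_mul, mul_sub,
    trace_smul, trace_sub, smul_eq_mul]
  have h1 : trace (Y * (A * X)) = trace (X * (Y * A)) := by
    rw [← mul_assoc, trace_mul_comm]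
  have h2 : trace (Y * (X * A)) = trace (X * (A * Y)) := by
    rw [trace_mul_comm Y (X * A), mul_assoc]
  rw [trace_mul_comm (X*A) Y, trace_mul_comm (A*X) Y, h1, h2]
  ring

lemma isUnit_one_add_exp {M : Matrix (Fin n) (Fin n) ℂ} (hM : M.IsHermitian) :
    IsUnit (1 + NormedSpace.exp M) := by
  set U : Matrix (Fin n) (Fin n) ℂ := (hM.eigenvectorUnitary : Matrix (Fin n) (Fin n) ℂ)
    with hUdef
  have hUs : star U * U = 1 := Matrix.mem_unitaryGroup_iff'.mp hM.eigenvectorUnitary.2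
  have hsU : U * star U = 1 := Matrix.mem_unitaryGroup_iff.mp hM.eigenvectorUnitary.2
  have hU : IsUnit U := (Matrix.isUnit_iff_isUnit_det _).mpr
    (IsUnit.of_mul_eq_one (det (star U)) (by rw [← det_mul, hsU, det_one]))
  have hinv : U⁻¹ = star U := Matrix.inv_eq_left_inv hUs
  have hexp : NormedSpace.exp M =
      U * NormedSpace.exp (diagonal (RCLike.ofReal ∘ hM.eigenvalues)) * star U := by
    conv_lhs => rw [hM.spectral_theorem]
    rw [Unitary.conjStarAlgAut_apply, ← hUdef, ← hinv, Matrix.exp_conj _ _ hU, hinv]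
  have key : (1 : Matrix (Fin n) (Fin n) ℂ) + NormedSpace.exp M =
      U * (1 + NormedSpace.exp (diagonal (RCLike.ofReal ∘ hM.eigenvalues))) * star U := by
    rw [hexp, mul_add, add_mul, mul_one, hsU]
  rw [Matrix.isUnit_iff_isUnit_det, key, Matrix.det_mul, Matrix.det_mul]
  refine (((Matrix.isUnit_iff_isUnit_det _).mp hU).mul ?_).mul
    ((Matrix.isUnit_iff_isUnit_det _).mp hU.star)
  rw [Matrix.exp_diagonal, ← Matrix.diagonal_one, Matrix.diagonal_add, Matrix.det_diagonal]
  rw [isUnit_iff_ne_zero]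
  apply Finset.prod_ne_zero_iff.mpr
  intro i _
  have : NormedSpace.exp (RCLike.ofReal ∘ hM.eigenvalues) i
      = Complex.exp (hM.eigenvalues i) := by
    rw [Pi.coe_exp, ← Complex.exp_eq_exp_ℂ]; rfl
  rw [this, ← Complex.ofReal_exp,
    show (1 : ℂ) + (Real.exp (hM.eigenvalues i) : ℂ)
      = ((1 + Real.exp (hM.eigenvalues i) : ℝ) : ℂ) by push_cast; ring,
    Complex.ofReal_ne_zero]
  positivity

/-- The Fermi-Dirac function is annihilated by the Liouvillian of H. -/
lemma liouv_fermiDirac (β : ℝ) {H : Matrix (Fin n) (Fin n) ℂ} (hH : H.IsHermitian) :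
    Liouv H (fermiDirac β H) = 0 := by
  set A : Matrix (Fin n) (Fin n) ℂ := 1 + NormedSpace.exp ((β : ℂ) • H) with hAdef
  have hHerm : ((β : ℂ) • H).IsHermitian := by
    rw [Matrix.IsHermitian, conjTranspose_smul, hH.eq, Complex.star_def, Complex.conj_ofReal]
  have hAdet : IsUnit A.det := (Matrix.isUnit_iff_isUnit_det _).mp (isUnit_one_add_exp hHerm)
  have hc : H * A = A * H := by
    have h1 : Commute H (NormedSpace.exp ((β : ℂ) • H)) :=
      ((Commute.refl H).smul_right ((β : ℂ))).exp_right
    have h2 : Commute H A := (Commute.one_right H).add_right h1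
    exact h2.eq
  have hcomm : H * A⁻¹ = A⁻¹ * H := by
    calc H * A⁻¹ = A⁻¹ * (A * H * A⁻¹) := by
          rw [← mul_assoc, ← mul_assoc, nonsing_inv_mul _ hAdet, one_mul]
      _ = A⁻¹ * (H * A * A⁻¹) := by rw [hc]
      _ = A⁻¹ * H := by rw [mul_assoc, mul_nonsing_inv _ hAdet, mul_one]
  have : fermiDirac β H = A⁻¹ := rfl
  rw [liouv_apply, this, hcomm, sub_self, smul_zero]

/-- Core injectivity: for Hermitian `A` and `δ > 0`, `δ•X - L_A X = 0` forces `X = 0`. -/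
lemma eq_zero_of_resolvent {A : Matrix (Fin n) (Fin n) ℂ} (hA : A.IsHermitian) {δ : ℝ}
    (hδ : 0 < δ) {X : Matrix (Fin n) (Fin n) ℂ}
    (hX : (δ : ℂ) • X - Liouv A X = 0) : X = 0 := by
  set s : ℂ := trace (Xᴴ * X) with hs
  set t : ℂ := trace (Xᴴ * (X * A - A * X)) with ht
  have heq : (δ : ℂ) * s = Complex.I * t := by
    have h := sub_eq_zero.mp hX
    have h2 := congrArg (fun Y => trace (Xᴴ * Y)) h
    simpa [liouv_apply, Matrix.mul_smul, trace_smul, hs, ht] using h2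
  have hs_star : star s = s := by
    rw [hs, ← Matrix.trace_conjTranspose, conjTranspose_mul, conjTranspose_conjTranspose]
  have ht_star : star t = t := by
    rw [ht, ← Matrix.trace_conjTranspose, conjTranspose_mul, conjTranspose_sub,
      conjTranspose_mul, conjTranspose_mul, conjTranspose_conjTranspose, hA.eq]
    rw [sub_mul, mul_sub, trace_sub, trace_sub]
    have e1 : trace (A * Xᴴ * X) = trace (Xᴴ * (X * A)) := by
      rw [mul_assoc, trace_mul_comm, mul_assoc]
    have e2 : trace (Xᴴ * A * X) = trace (Xᴴ * (A * X)) := by rw [mul_assoc]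
    rw [e1, e2]
  have heq2 : (δ : ℂ) * s = - (Complex.I * t) := by
    have := congrArg star heq
    simpa [hs_star, ht_star, Complex.star_def, Complex.conj_ofReal, mul_comm] using this
  have hs0 : s = 0 := by
    have hsum : (2 * δ : ℂ) * s = 0 := by
      have := heq.symm ▸ heq2
      linear_combination heq + heq2
    have hδne : (2 * δ : ℂ) ≠ 0 := by
      simp only [ne_eq, mul_eq_zero, not_or]
      exact ⟨two_ne_zero, by exact_mod_cast hδ.ne'⟩
    exact (mul_eq_zero.mp hsum).resolve_left hδne
  -- from trace (Xᴴ * X) = 0 conclude X = 0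
  have hsum : ∑ i, ∑ j, Complex.normSq (X j i) = 0 := by
    have : s = ((∑ i, ∑ j, Complex.normSq (X j i) : ℝ) : ℂ) := by
      rw [hs, Matrix.trace]
      push_cast
      refine Finset.sum_congr rfl fun i _ => ?_
      rw [Matrix.diag_apply, Matrix.mul_apply]
      refine Finset.sum_congr rfl fun j _ => ?_
      rw [Matrix.conjTranspose_apply, Complex.star_def, ← Complex.normSq_eq_conj_mul_self]
    rw [this, Complex.ofReal_eq_zero] at hs0
    exact hs0
  ext i j
  have h1 : ∀ i ∈ Finset.univ, (0:ℝ) ≤ ∑ j, Complex.normSq (X j i) :=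
    fun i _ => Finset.sum_nonneg fun j _ => Complex.normSq_nonneg _
  have h2 := (Finset.sum_eq_zero_iff_of_nonneg h1).mp hsum j (Finset.mem_univ _)
  have h3 := (Finset.sum_eq_zero_iff_of_nonneg
    (fun k _ => Complex.normSq_nonneg (X k j))).mp h2 i (Finset.mem_univ _)
  simpa using Complex.normSq_eq_zero.mp h3

lemma bij_aux {A : Matrix (Fin n) (Fin n) ℂ} (hA : A.IsHermitian) {δ : ℝ} (hδ : 0 < δ) :
    Function.Bijective (fun X : Matrix (Fin n) (Fin n) ℂ => (δ : ℂ) • X - Liouv A X) := by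
  set T : Matrix (Fin n) (Fin n) ℂ →ₗ[ℂ] Matrix (Fin n) (Fin n) ℂ :=
    (δ : ℂ) • LinearMap.id - Liouv A with hT
  have hfun : (fun X : Matrix (Fin n) (Fin n) ℂ => (δ : ℂ) • X - Liouv A X) = ⇑T := by
    funext X; simp [hT, LinearMap.sub_apply]
  rw [hfun]
  have hinj : Function.Injective T := by
    intro X Y hXY
    have h0 : T (X - Y) = 0 := by rw [map_sub, hXY, sub_self]
    have : (δ : ℂ) • (X - Y) - Liouv A (X - Y) = 0 := by
      simpa [hT, LinearMap.sub_apply] using h0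
    have := eq_zero_of_resolvent hA hδ this
    exact sub_eq_zero.mp this
  exact ⟨hinj, LinearMap.injective_iff_surjective.mp hinj⟩

end LinResAux

open LinResAux in
/-- Appendix B, exact linear response identity: for Hermitian H, P,
real β, δ > 0 and λ ∈ ℝ, the superoperators δ - L_H - λL_P and δ + L_H + λL_P are
bijective, and if F = (δ - L_H - λL_P)⁻¹(f_β(H)) and G = (δ + L_H + λL_P)⁻¹(J), then
(δ/2)·Tr(F·J) = ½·Tr(f_β(H)·J) + (λ/2)·Tr(L_P(f_β(H))·G). -/
theorem exact_linear_response (n : ℕ) (hn : 1 ≤ n)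
    (H P J : Matrix (Fin n) (Fin n) ℂ) (hH : H.IsHermitian) (hP : P.IsHermitian)
    (β δ lam : ℝ) (hδ : 0 < δ) :
    Function.Bijective (fun X : Matrix (Fin n) (Fin n) ℂ =>
      δ • X - Liouv H X - lam • Liouv P X) ∧
    Function.Bijective (fun X : Matrix (Fin n) (Fin n) ℂ =>
      δ • X + Liouv H X + lam • Liouv P X) ∧
    (∀ F G : Matrix (Fin n) (Fin n) ℂ,
      δ • F - Liouv H F - lam • Liouv P F = fermiDirac β H →
      δ • G + Liouv H G + lam • Liouv P G = J →
      ((δ : ℂ) / 2) * Matrix.trace (F * J) =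
        (1 / 2) * Matrix.trace (fermiDirac β H * J) +
          ((lam : ℂ) / 2) * Matrix.trace (Liouv P (fermiDirac β H) * G)) := by
  set A : Matrix (Fin n) (Fin n) ℂ := H + (lam : ℂ) • P with hAdef
  have hAh : A.IsHermitian := by
    rw [Matrix.IsHermitian, hAdef, conjTranspose_add, conjTranspose_smul, hH.eq, hP.eq,
      Complex.star_def, Complex.conj_ofReal]
  have hfun1 : (fun X : Matrix (Fin n) (Fin n) ℂ =>
      δ • X - Liouv H X - lam • Liouv P X) =
      (fun X : Matrix (Fin n) (Fin n) ℂ => (δ : ℂ) • X - Liouv A X) := by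
    funext X
    rw [real_smul_eq δ X, real_smul_eq lam (Liouv P X), sub_sub, liouv_eq, hAdef]
  have hfun2 : (fun X : Matrix (Fin n) (Fin n) ℂ =>
      δ • X + Liouv H X + lam • Liouv P X) =
      (fun X : Matrix (Fin n) (Fin n) ℂ => (δ : ℂ) • X - Liouv (-A) X) := by
    funext X
    rw [liouv_neg, sub_neg_eq_add, real_smul_eq δ X, real_smul_eq lam (Liouv P X), add_assoc,
      liouv_eq, hAdef]
  refine ⟨by rw [hfun1]; exact bij_aux hAh hδ, by rw [hfun2]; exact bij_aux hAh.neg hδ, ?_⟩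
  intro F G hF hG
  set f : Matrix (Fin n) (Fin n) ℂ := fermiDirac β H with hfdef
  have hF' : (δ : ℂ) • F - Liouv A F = f := by rw [← congrFun hfun1 F]; exact hF
  have hG' : (δ : ℂ) • G + Liouv A G = J := by
    have := congrFun hfun2 G
    rw [liouv_neg, sub_neg_eq_add] at this
    rw [← this]; exact hG
  have hLf : Liouv A f = (lam : ℂ) • Liouv P f := by
    rw [hAdef, ← liouv_eq, hfdef, liouv_fermiDirac β hH, zero_add]
  have key1 : ∀ X Y : Matrix (Fin n) (Fin n) ℂ,
      trace (X * Liouv A Y) = - trace (Liouv A X * Y) := by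
    intro X Y; rw [trace_liouv_mul A X Y, neg_neg]
  have step1 : trace (F * J) = trace (f * G) := by
    rw [← hG', ← hF']
    rw [mul_add, Matrix.mul_smul, trace_add, trace_smul, sub_mul, Matrix.smul_mul,
      trace_sub, trace_smul, key1]
    ring
  have step2 : trace (f * J) =
      (δ : ℂ) * trace (f * G) - (lam : ℂ) * trace (Liouv P f * G) := by
    rw [← hG', mul_add, Matrix.mul_smul, trace_add, trace_smul, key1, hLf,
      Matrix.smul_mul, trace_smul]
    simp only [smul_eq_mul]
    ring
  rw [step1, step2]
  ring
end
end
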